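/- Let L be an irreducible simply-laced root lattice that is not of type A₁, with Weyl group W, and let N_L = image(L/2L → L^∨/2L^∨). Then there exists an element w ∈ W whose only fixed point on N_L is 0, i.e. N_L^w = 0. -/

import Mathlib

/-- `w : L ≃ₗ[ℤ] L` is the reflection `x ↦ x - ⟨x,α⟩ α` in a root `α`
(an element with `⟨α,α⟩ = 2`) of the lattice `(L, B)`. -/
def IsRootReflection {L : Type*} [AddCommGroup L]
    (B : L →ₗ[ℤ] L →ₗ[ℤ] ℤ) (w : L ≃ₗ[ℤ] L) : Prop :=
  ∃ α : L, B α α = 2 ∧ ∀ x : L, w x = x - B x α • α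

/-- The Weyl group of the lattice `(L, B)`: the subgroup of automorphisms of `L`
generated by the reflections in the roots. -/
def WeylGroup {L : Type*} [AddCommGroup L]
    (B : L →ₗ[ℤ] L →ₗ[ℤ] ℤ) : Subgroup (L ≃ₗ[ℤ] L) :=
  Subgroup.closure {w | IsRootReflection B w}

/-- The map `L → Hom(L, ℤ/2ℤ)`, `x ↦ (y ↦ ⟨x,y⟩ mod 2)`; its range is
`N_L = image(L/2L → L^∨/2L^∨)`, and the natural `W`-action on `N_L` is given by
`modTwoPairing B x ↦ modTwoPairing B (w x)`. -/
def modTwoPairing {L : Type*} [AddCommGroup L] (B : L →ₗ[ℤ] L →ₗ[ℤ] ℤ) :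
    L →+ (L →+ ZMod 2) where
  toFun x := (Int.castAddHom (ZMod 2)).comp (B x).toAddMonoidHom
  map_zero' := by ext y; simp
  map_add' x y := by ext z; simp

section Aux

variable {L : Type*} [AddCommGroup L] (B : L →ₗ[ℤ] L →ₗ[ℤ] ℤ)

/-- The mod-two pairing, packaged as a `ℤ`-linear map into `L →ₗ[ℤ] ZMod 2`. -/
noncomputable def PHI : L →ₗ[ℤ] (L →ₗ[ℤ] ZMod 2) where
  toFun x := (Int.castAddHom (ZMod 2)).toIntLinearMap.comp (B x)
  map_add' x y := by ext z; simp
  map_smul' n x := by ext z; simp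

@[simp] lemma PHI_apply (x y : L) : PHI B x y = ((B x y : ℤ) : ZMod 2) := rfl

lemma mtp_eq_iff (x y : L) :
    modTwoPairing B x = modTwoPairing B y ↔ PHI B x = PHI B y := by
  constructor
  · intro h
    ext z
    have := congrArg (fun f => f z) h
    simpa [modTwoPairing] using this
  · intro h
    ext z
    have := congrArg (fun f => f z) h
    simpa [modTwoPairing] using this

lemma mtp_eq_zero_iff (x : L) :
    modTwoPairing B x = 0 ↔ PHI B x = 0 := by
  constructor
  · intro h
    ext z
    have := congrArg (fun f => f z) h
    simpa [modTwoPairing] using this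
  · intro h
    ext z
    have := congrArg (fun f => f z) h
    simpa [modTwoPairing] using this

/-- The reflection in a root, as a linear automorphism. -/
def rref (α : L) (hα : B α α = 2) : L ≃ₗ[ℤ] L where
  toFun x := x - B x α • α
  invFun x := x - B x α • α
  map_add' x y := by
    simp only [map_add, LinearMap.add_apply, add_smul]
    abel
  map_smul' n x := by
    simp only [map_smul, LinearMap.smul_apply, RingHom.id_apply, smul_sub, smul_assoc]
  left_inv x := by
    show (x - B x α • α) - B (x - B x α • α) α • α = x
    have h : B (x - B x α • α) α = - B x α := by
      simp only [map_sub, map_smul, LinearMap.sub_apply, LinearMap.smul_apply,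
        smul_eq_mul, hα]
      ring
    rw [h, neg_smul, sub_neg_eq_add, sub_add_cancel]
  right_inv x := by
    show (x - B x α • α) - B (x - B x α • α) α • α = x
    have h : B (x - B x α • α) α = - B x α := by
      simp only [map_sub, map_smul, LinearMap.sub_apply, LinearMap.smul_apply,
        smul_eq_mul, hα]
      ring
    rw [h, neg_smul, sub_neg_eq_add, sub_add_cancel]

lemma list_get_mem' {α : Type*} (l : List α) (j : Fin l.length) : l.get j ∈ l := by
  cases j
  exact List.get_mem _ _

lemma rref_mem : ∀ (α : L) (hα : B α α = 2), (rref B α hα : L ≃ₗ[ℤ] L) ∈ WeylGroup B :=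
  fun α hα => Subgroup.subset_closure ⟨α, hα, fun _ => rfl⟩

lemma rref_apply (α : L) (hα : B α α = 2) (x : L) : rref B α hα x = x - B x α • α := rfl

/-- Roots as a subtype. -/
abbrev Root := {α : L // B α α = 2}

/-- Product of reflections along a list of roots. -/
noncomputable def wlist : List (Root B) → (L ≃ₗ[ℤ] L)
  | [] => 1
  | γ :: gs => rref B γ.1 γ.2 * wlist gs

lemma wlist_mem (gs : List (Root B)) : wlist B gs ∈ WeylGroup B := by
  induction gs with
  | nil => exact one_mem _
  | cons γ gs ih => exact mul_mem (rref_mem B γ.1 γ.2) ih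

lemma wlist_cons (γ : Root B) (gs : List (Root B)) (x : L) :
    wlist B (γ :: gs) x = rref B γ.1 γ.2 (wlist B gs x) := rfl

/-- family of mod-2 images of a list of roots -/
noncomputable def fam (gs : List (Root B)) : Fin gs.length → (L →ₗ[ℤ] ZMod 2) :=
  fun i => PHI B (gs.get i).1

lemma fam_cons (γ : Root B) (gs : List (Root B)) :
    fam B (γ :: gs) = Fin.cons (PHI B γ.1) (fam B gs) := by
  funext i
  refine Fin.cases ?_ ?_ i <;> intros <;> rfl

lemma PHI_rref (α : L) (hα : B α α = 2) (y : L) :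
    PHI B (rref B α hα y) = PHI B y - ((B y α : ℤ) : ZMod 2) • PHI B α := by
  rw [rref_apply, map_sub, map_smul]
  congr 1
  ext z
  simp [zsmul_eq_mul]

lemma wlist_span (gs : List (Root B)) (x : L) :
    PHI B (wlist B gs x) - PHI B x ∈
      Submodule.span (ZMod 2) (Set.range (fam B gs)) := by
  induction gs with
  | nil => simp [wlist]
  | cons γ gs ih =>
    rw [wlist_cons, PHI_rref]
    have h1 : PHI B (wlist B gs x) - ((B (wlist B gs x) γ.1 : ℤ) : ZMod 2) • PHI B γ.1
        - PHI B x = (PHI B (wlist B gs x) - PHI B x)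
          - ((B (wlist B gs x) γ.1 : ℤ) : ZMod 2) • PHI B γ.1 := by abel
    rw [h1, fam_cons, Fin.range_cons]
    refine Submodule.sub_mem _ ?_ ?_
    · exact Submodule.span_mono (Set.subset_insert _ _) (ih)
    · exact Submodule.smul_mem _ _ (Submodule.subset_span (Set.mem_insert _ _))

lemma wlist_key (gs : List (Root B)) (hind : LinearIndependent (ZMod 2) (fam B gs))
    (x : L) (hx : PHI B (wlist B gs x) = PHI B x) :
    ∀ γ ∈ gs, ((B x γ.1 : ℤ) : ZMod 2) = 0 := by
  induction gs with
  | nil => intro γ h; cases h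
  | cons γ gs ih =>
    rw [fam_cons, linearIndependent_fin_cons] at hind
    obtain ⟨hind', hnot⟩ := hind
    rw [wlist_cons, PHI_rref] at hx
    set c : ZMod 2 := ((B (wlist B gs x) γ.1 : ℤ) : ZMod 2) with hc
    -- PHI (w' x) - c • PHI γ = PHI x
    have hv : PHI B (wlist B gs x) - PHI B x = c • PHI B γ.1 := by
      rw [← hx]; abel
    have hcz : c = 0 := by
      by_contra hne
      have hc1 : c = 1 := by
        have : ∀ d : ZMod 2, d ≠ 0 → d = 1 := by decide
        exact this c hne
      rw [hc1, one_smul] at hv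
      exact hnot (hv ▸ wlist_span B gs x)
    have hfix : PHI B (wlist B gs x) = PHI B x := by
      have := hv; rw [hcz, zero_smul, sub_eq_zero] at this; exact this
    have htail := ih hind' hfix
    intro δ hδ
    rcases List.mem_cons.mp hδ with h | h
    · subst h
      have : ((B x δ.1 : ℤ) : ZMod 2) = c := by
        rw [hc]
        have := congrArg (fun f => f δ.1) hfix
        simpa using this.symm
      rw [this, hcz]
    · exact htail δ h

end Aux

/-- For an irreducible simply-laced root lattice not of type `A₁`, there is an
element `w` of the Weyl group with no nonzero fixed point on
`N_L = image(L/2L → L^∨/2L^∨)`, i.e. `N_L^w = 0`. -/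
theorem exists_weyl_element_no_nonzero_fixed_point_on_NL
    (L : Type*) [AddCommGroup L] [Module.Free ℤ L] [Module.Finite ℤ L]
    (B : L →ₗ[ℤ] L →ₗ[ℤ] ℤ)
    (hsym : ∀ x y : L, B x y = B y x)
    (hpos : ∀ x : L, x ≠ 0 → 0 < B x x)
    (heven : ∀ x : L, 2 ∣ B x x)
    (hspan : Submodule.span ℤ {α : L | B α α = 2} = ⊤)
    (hirr : ¬ ∃ S : Set L, S ⊆ {α : L | B α α = 2} ∧ S.Nonempty ∧
      ({α : L | B α α = 2} \ S).Nonempty ∧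
      ∀ α ∈ S, ∀ β ∈ ({α : L | B α α = 2} \ S), B α β = 0)
    (hrank : 2 ≤ Module.finrank ℤ L) :
    ∃ w ∈ WeylGroup B, ∀ x : L,
      modTwoPairing B (w x) = modTwoPairing B x → modTwoPairing B x = 0 := by
  classical
  -- finiteness of the target space
  have hFin : Finite (L →ₗ[ℤ] ZMod 2) := by
    let b := Module.Free.chooseBasis ℤ L
    exact Finite.of_injective
      (fun f => (fun i => f (b i) : Module.Free.ChooseBasisIndex ℤ L → ZMod 2))
      (fun f g h => b.ext (fun i => congrFun h i))
  set t : Set (L →ₗ[ℤ] ZMod 2) := (PHI B) '' {α : L | B α α = 2} with ht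
  obtain ⟨s, hst, hsp, hind⟩ := exists_linearIndependent (ZMod 2) t
  have hsfin : s.Finite := Set.toFinite s
  -- every PHI x lies in the span of t
  have hPhiSpan : ∀ x : L, PHI B x ∈ Submodule.span (ZMod 2) t := by
    intro x
    let W : Submodule ℤ L :=
      { carrier := {x | PHI B x ∈ Submodule.span (ZMod 2) t}
        add_mem' := by
          intro a b ha hb
          simp only [Set.mem_setOf_eq, map_add] at *
          exact Submodule.add_mem _ ha hb
        zero_mem' := by simp
        smul_mem' := by
          intro n a ha
          simp only [Set.mem_setOf_eq, map_smul] at *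
          exact (Submodule.span (ZMod 2) t).toAddSubgroup.zsmul_mem ha n }
    have hWtop : W = ⊤ := by
      rw [eq_top_iff, ← hspan]
      refine Submodule.span_le.mpr ?_
      intro α hα
      exact Submodule.subset_span ⟨α, hα, rfl⟩
    have : x ∈ W := by rw [hWtop]; trivial
    exact this
  -- choose roots lifting the elements of s
  have hchoice : ∀ f ∈ s, ∃ γ : Root B, PHI B γ.1 = f := by
    intro f hf
    obtain ⟨α, hα, rfl⟩ := hst hf
    exact ⟨⟨α, hα⟩, rfl⟩
  set sl := hsfin.toFinset.toList with hsl
  have hslnd : sl.Nodup := Finset.nodup_toList _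
  have hslmem : ∀ f ∈ sl, f ∈ s := by
    intro f hf
    rw [hsl, Finset.mem_toList, Set.Finite.mem_toFinset] at hf
    exact hf
  choose lift hlift using hchoice
  set gs : List (Root B) := sl.attach.map (fun f => lift f.1 (hslmem f.1 f.2)) with hgs
  have hlen : gs.length = sl.length := by simp [hgs]
  have hfam : ∀ i : Fin gs.length, fam B gs i = sl.get (Fin.cast hlen i) := by
    intro i
    simp only [fam, hgs]
    rw [List.get_eq_getElem, List.getElem_map]
    rw [hlift]
    congr 1
    simp [List.get_attach]
  -- linear independence of fam gs
  have hindfam : LinearIndependent (ZMod 2) (fam B gs) := by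
    have heq : fam B gs = (fun f : s => (f : L →ₗ[ℤ] ZMod 2)) ∘
        (fun i : Fin gs.length => (⟨sl.get (Fin.cast hlen i),
          hslmem _ (list_get_mem' sl _)⟩ : s)) := by
      funext i
      simp [hfam i]
    rw [heq]
    refine hind.comp _ ?_
    intro i j hij
    have : sl.get (Fin.cast hlen i) = sl.get (Fin.cast hlen j) := by
      simpa using congrArg Subtype.val hij
    have := (List.Nodup.get_inj_iff hslnd).mp this
    simpa [Fin.ext_iff] using this
  -- range of fam gs spans the span of t
  have hrange : Set.range (fam B gs) = s := by
    ext f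
    constructor
    · rintro ⟨i, rfl⟩
      rw [hfam i]
      exact hslmem _ (list_get_mem' sl _)
    · intro hf
      have : f ∈ sl := by
        rw [hsl, Finset.mem_toList, Set.Finite.mem_toFinset]; exact hf
      obtain ⟨i, hi⟩ := List.get_of_mem this
      exact ⟨Fin.cast hlen.symm i, by rw [hfam]; simpa using hi⟩
  refine ⟨wlist B gs, wlist_mem B gs, ?_⟩
  intro x hx
  rw [mtp_eq_iff] at hx
  rw [mtp_eq_zero_iff]
  have hkey := wlist_key B gs hindfam x hx
  -- now show PHI B x = 0
  have hev : ∀ y : L, PHI B y x = 0 → PHI B x y = 0 := by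
    intro y h
    have : ((B y x : ℤ) : ZMod 2) = 0 := h
    rw [hsym] at this
    exact this
  -- evaluation functional
  let ev : (L →ₗ[ℤ] ZMod 2) →ₗ[ZMod 2] ZMod 2 :=
    { toFun := fun f => f x
      map_add' := fun f g => rfl
      map_smul' := fun c f => rfl }
  have hev0 : ∀ f ∈ Submodule.span (ZMod 2) t, ev f = 0 := by
    have hle : Submodule.span (ZMod 2) t ≤ LinearMap.ker ev := by
      rw [← hsp]
      refine Submodule.span_le.mpr ?_
      intro f hf
      obtain ⟨i, rfl⟩ : f ∈ Set.range (fam B gs) := by rw [hrange]; exact hf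
      have : ((B x (gs.get i).1 : ℤ) : ZMod 2) = 0 := hkey _ (list_get_mem' gs i)
      have h2 : ((B (gs.get i).1 x : ℤ) : ZMod 2) = 0 := by rw [hsym]; exact this
      simpa [LinearMap.mem_ker, ev, fam] using h2
    intro f hf
    exact hle hf
  ext y
  have := hev0 (PHI B y) (hPhiSpan y)
  have h3 : ((B y x : ℤ) : ZMod 2) = 0 := this
  have h4 : ((B x y : ℤ) : ZMod 2) = 0 := by rw [hsym]; exact h3
  exact h4
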